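/- For every n ≥ 1, the number of permutations of {1,...,n} avoiding the generalized pattern 12-3 and containing exactly one occurrence of the generalized pattern 13-2 equals (n-3)·2^(n-2) + 1. -/

import Mathlib

/-- The value of the permutation at position `i` (0-indexed), or 0 if out of range. -/
def permVal {n : ℕ} (π : Equiv.Perm (Fin n)) (i : ℕ) : ℕ :=
  if h : i < n then (π ⟨i, h⟩ : ℕ) else 0

/-- Number of occurrences of the generalized pattern 12-3. -/
def occ12_3 {n : ℕ} (π : Equiv.Perm (Fin n)) : ℕ :=
  ((Finset.range n ×ˢ Finset.range n).filter (fun p =>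
    p.1 + 1 < p.2 ∧ permVal π p.1 < permVal π (p.1 + 1) ∧
      permVal π (p.1 + 1) < permVal π p.2)).card

/-- Number of occurrences of the generalized pattern 13-2. -/
def occ13_2 {n : ℕ} (π : Equiv.Perm (Fin n)) : ℕ :=
  ((Finset.range n ×ˢ Finset.range n).filter (fun p =>
    p.1 + 1 < p.2 ∧ permVal π p.1 < permVal π p.2 ∧
      permVal π p.2 < permVal π (p.1 + 1))).card

/-- Number of occurrences of the generalized pattern 21-3. -/
def occ21_3 {n : ℕ} (π : Equiv.Perm (Fin n)) : ℕ :=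
  ((Finset.range n ×ˢ Finset.range n).filter (fun p =>
    p.1 + 1 < p.2 ∧ permVal π (p.1 + 1) < permVal π p.1 ∧
      permVal π p.1 < permVal π p.2)).card

/-- Number of occurrences of the generalized pattern 23-1. -/
def occ23_1 {n : ℕ} (π : Equiv.Perm (Fin n)) : ℕ :=
  ((Finset.range n ×ˢ Finset.range n).filter (fun p =>
    p.1 + 1 < p.2 ∧ permVal π p.2 < permVal π p.1 ∧
      permVal π p.1 < permVal π (p.1 + 1))).card

/-- Number of occurrences of the generalized pattern 31-2. -/
def occ31_2 {n : ℕ} (π : Equiv.Perm (Fin n)) : ℕ :=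
  ((Finset.range n ×ˢ Finset.range n).filter (fun p =>
    p.1 + 1 < p.2 ∧ permVal π (p.1 + 1) < permVal π p.2 ∧
      permVal π p.2 < permVal π p.1)).card

/-- Number of occurrences of the generalized pattern 32-1. -/
def occ32_1 {n : ℕ} (π : Equiv.Perm (Fin n)) : ℕ :=
  ((Finset.range n ×ˢ Finset.range n).filter (fun p =>
    p.1 + 1 < p.2 ∧ permVal π p.2 < permVal π (p.1 + 1) ∧
      permVal π (p.1 + 1) < permVal π p.1)).card

def lv (l : List ℕ) (i : ℕ) : ℕ := l.getD i 0

@[simp] lemma lv_cons_succ (a : ℕ) (l : List ℕ) (k : ℕ) : lv (a :: l) (k+1) = lv l k := rfl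
@[simp] lemma lv_cons_zero (a : ℕ) (l : List ℕ) : lv (a :: l) 0 = a := rfl

def occL (C : ℕ → ℕ → ℕ → Bool) : List ℕ → ℕ
  | a :: b :: t => t.countP (C a b) + occL C (b :: t)
  | _ => 0

@[simp] lemma occL_nil (C) : occL C [] = 0 := rfl
@[simp] lemma occL_single (C) (a : ℕ) : occL C [a] = 0 := rfl
@[simp] lemma occL_cons (C) (a b : ℕ) (t : List ℕ) :
    occL C (a :: b :: t) = t.countP (C a b) + occL C (b :: t) := rfl

lemma filter_decide {α : Type*} (s : Finset α) (q : α → Prop) [DecidablePred q] :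
    s.filter (fun x => decide (q x) = true) = s.filter q :=
  Finset.filter_congr (fun x _ => by simp)

lemma filter_range_card (q : ℕ → Bool) (n : ℕ) :
    ((Finset.range n).filter (fun k => q k)).card = (List.range n).countP q := by
  simp [Finset.range, Finset.filter, Finset.card, Multiset.range, Multiset.filter,
    List.countP_eq_length_filter]

lemma split_lemma (q : ℕ → Prop) [DecidablePred q] (n : ℕ) :
    ((Finset.range (n+1)).filter q).card =
      (if q 0 then 1 else 0) + ((Finset.range n).filter (fun k => q (k+1))).card := by
  rw [← filter_decide _ q, ← filter_decide _ (fun k => q (k+1))]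
  rw [filter_range_card, filter_range_card, List.range_succ_eq_map, List.countP_cons,
    List.countP_map]
  simp only [Function.comp_def, Nat.succ_eq_add_one, decide_eq_true_eq]
  by_cases h : q 0 <;> simp [h, add_comm]

lemma index_count (p : ℕ → Bool) (t : List ℕ) :
    t.countP p = ((Finset.range t.length).filter (fun k => p (lv t k) = true)).card := by
  induction t with
  | nil => simp
  | cons x t ih =>
    rw [List.length_cons, split_lemma, List.countP_cons]
    simp only [lv_cons_succ, lv_cons_zero, ← ih]
    by_cases h : p x <;> simp [h] <;> rw [ih] <;> [rw [add_comm]; skip] <;> congr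

lemma pair_sum {α β : Type*} [DecidableEq α] (s : Finset α) (t : Finset β)
    (P : α → β → Prop) [∀ a b, Decidable (P a b)] :
    ((s ×ˢ t).filter (fun p => P p.1 p.2)).card = ∑ i ∈ s, (t.filter (fun j => P i j)).card := by
  rw [Finset.card_eq_sum_card_fiberwise (f := Prod.fst) (t := s)
    (fun p hp => (Finset.mem_product.1 (Finset.mem_filter.1 hp).1).1)]
  refine Finset.sum_congr rfl (fun i hi => ?_)
  refine Finset.card_nbij' (fun p => p.2) (fun j => (i, j)) ?_ ?_ ?_ ?_
  · intro p hp
    simp only [Finset.mem_coe, Finset.mem_filter, Finset.mem_product] at hp ⊢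
    obtain ⟨⟨⟨h1, h2⟩, h3⟩, h4⟩ := hp
    subst h4; exact ⟨h2, h3⟩
  · intro j hj
    simp only [Finset.mem_coe, Finset.mem_filter, Finset.mem_product] at hj ⊢
    exact ⟨⟨⟨hi, hj.1⟩, hj.2⟩, trivial⟩
  · intro p hp
    simp only [Finset.mem_coe, Finset.mem_filter, Finset.mem_product] at hp
    obtain ⟨_, h4⟩ := hp
    simp [← h4]
  · intro j hj; rfl

lemma filter_card_congr {α : Type*} {s : Finset α} (p q : α → Prop) [DecidablePred p]
    [DecidablePred q] (h : ∀ x ∈ s, p x ↔ q x) : (s.filter p).card = (s.filter q).card := by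
  rw [Finset.filter_congr h]

/-- Closed form for `occL`. -/
lemma occL_closed (C : ℕ → ℕ → ℕ → Bool) (l : List ℕ) :
    occL C l = ((Finset.range l.length ×ˢ Finset.range l.length).filter (fun p =>
      p.1 + 1 < p.2 ∧ C (lv l p.1) (lv l (p.1+1)) (lv l p.2) = true)).card := by
  induction l with
  | nil => simp
  | cons a l ih =>
    rw [pair_sum (Finset.range (a :: l).length) (Finset.range (a :: l).length)
      (fun i j => i + 1 < j ∧ C (lv (a::l) i) (lv (a::l) (i+1)) (lv (a::l) j) = true)]
    rw [List.length_cons, Finset.sum_range_succ']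
    have hshift : ∀ i ∈ Finset.range l.length,
        ((Finset.range (l.length+1)).filter (fun j => (i+1) + 1 < j ∧
          C (lv (a::l) (i+1)) (lv (a::l) (i+1+1)) (lv (a::l) j) = true)).card =
        ((Finset.range l.length).filter (fun j => i + 1 < j ∧
          C (lv l i) (lv l (i+1)) (lv l j) = true)).card := by
      intro i _
      rw [split_lemma]
      have h0 : ¬ ((i+1)+1 < 0 ∧ C (lv (a::l) (i+1)) (lv (a::l) (i+1+1)) (lv (a::l) 0) = true) := by
        simp
      rw [if_neg h0, zero_add]
      exact filter_card_congr _ _ (fun j _ => by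
        simp only [lv_cons_succ]
        constructor <;> (rintro ⟨h1, h2⟩; exact ⟨by omega, h2⟩))
    rw [Finset.sum_congr rfl hshift]
    have hsum : ∑ i ∈ Finset.range l.length, ((Finset.range l.length).filter (fun j => i + 1 < j ∧
          C (lv l i) (lv l (i+1)) (lv l j) = true)).card = occL C l := by
      rw [ih, pair_sum (Finset.range l.length) (Finset.range l.length)
        (fun i j => i + 1 < j ∧ C (lv l i) (lv l (i+1)) (lv l j) = true)]
    rw [hsum]
    rcases l with _ | ⟨b, t⟩
    · simp [Finset.filter_singleton]
    · rw [occL_cons]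
      have h1 : ((Finset.range ((b :: t).length + 1)).filter (fun j => 0 + 1 < j ∧
          C (lv (a::b::t) 0) (lv (a::b::t) (0+1)) (lv (a::b::t) j) = true)).card
          = t.countP (C a b) := by
        rw [split_lemma]
        rw [if_neg (by simp)]
        rw [List.length_cons, split_lemma]
        rw [if_neg (by simp)]
        rw [index_count (C a b) t]
        simp only [zero_add]
        refine (filter_card_congr _ _ (fun j hj => ?_)).symm
        simp only [lv_cons_succ, lv_cons_zero]
        constructor
        · exact fun h => ⟨by omega, h⟩
        · exact fun h => h.2
      rw [h1]
      omega
def condA (a b x : ℕ) : Bool := decide (a < b ∧ b < x)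
def condB (a b x : ℕ) : Bool := decide (a < x ∧ x < b)

def pl {n : ℕ} (π : Equiv.Perm (Fin n)) : List ℕ := List.ofFn (fun i => (π i : ℕ))

lemma lv_pl {n : ℕ} (π : Equiv.Perm (Fin n)) (i : ℕ) : lv (pl π) i = permVal π i := by
  unfold lv pl permVal
  by_cases h : i < n
  · rw [List.getD_eq_getElem _ _ (by simpa using h), dif_pos h]
    simp
  · rw [List.getD_eq_default _ _ (by simpa using Nat.le_of_not_lt h), dif_neg h]

lemma occ12_3_eq {n : ℕ} (π : Equiv.Perm (Fin n)) : occ12_3 π = occL condA (pl π) := by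
  rw [occ12_3, occL_closed]
  have hl : (pl π).length = n := by simp [pl]
  rw [hl]
  exact (filter_card_congr _ _ (fun p _ => by simp [lv_pl, condA])).symm

lemma occ13_2_eq {n : ℕ} (π : Equiv.Perm (Fin n)) : occ13_2 π = occL condB (pl π) := by
  rw [occ13_2, occL_closed]
  have hl : (pl π).length = n := by simp [pl]
  rw [hl]
  exact (filter_card_congr _ _ (fun p _ => by simp [lv_pl, condB])).symm

def perms (s : Finset ℕ) : Finset (List ℕ) := (s.sort (· ≤ ·)).permutations.toFinset

lemma mem_perms {s : Finset ℕ} {l : List ℕ} : l ∈ perms s ↔ l.Nodup ∧ l.toFinset = s := by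
  rw [perms, List.mem_toFinset, List.mem_permutations]
  constructor
  · intro h
    refine ⟨h.nodup_iff.2 (Finset.sort_nodup s _), ?_⟩
    rw [List.toFinset_eq_of_perm _ _ h, Finset.sort_toFinset]
  · intro ⟨h1, h2⟩
    exact List.perm_of_nodup_nodup_toFinset_eq h1 (Finset.sort_nodup s _)
      (by rw [h2, Finset.sort_toFinset])

lemma card_perm_eq (n : ℕ) :
    (Finset.univ.filter (fun π : Equiv.Perm (Fin n) =>
      occ12_3 π = 0 ∧ occ13_2 π = 1)).card =
    ((perms (Finset.range n)).filter (fun l => occL condA l = 0 ∧ occL condB l = 1)).card := by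
  refine Finset.card_bij (fun π _ => pl π) ?_ ?_ ?_
  · intro π hπ
    simp only [Finset.mem_filter, Finset.mem_univ, true_and] at hπ
    rw [Finset.mem_filter, mem_perms]
    refine ⟨⟨?_, ?_⟩, ?_, ?_⟩
    · exact List.nodup_ofFn.2 (fun i j h => π.injective (Fin.val_injective h))
    · ext x
      simp only [pl, List.mem_toFinset, List.mem_ofFn, Finset.mem_range]
      constructor
      · rintro ⟨i, rfl⟩; exact (π i).isLt
      · intro hx
        exact ⟨π.symm ⟨x, hx⟩, by simp⟩
    · rw [← occ12_3_eq]; exact hπ.1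
    · rw [← occ13_2_eq]; exact hπ.2
  · intro π _ π' _ h
    apply Equiv.ext
    intro i
    have := List.ofFn_inj.1 h
    exact Fin.val_injective (congrFun this i)
  · intro l hl
    rw [Finset.mem_filter, mem_perms] at hl
    obtain ⟨⟨hnd, hfs⟩, hA, hB⟩ := hl
    have hlen : l.length = n := by
      rw [← List.toFinset_card_of_nodup hnd, hfs, Finset.card_range]
    have hmem : ∀ i : Fin n, l.get (Fin.cast hlen.symm i) < n := by
      intro i
      have : l.get (Fin.cast hlen.symm i) ∈ l.toFinset :=
        List.mem_toFinset.2 (List.mem_iff_get.2 ⟨_, rfl⟩)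
      rw [hfs, Finset.mem_range] at this
      exact this
    set f : Fin n → Fin n := fun i => ⟨l.get (Fin.cast hlen.symm i), hmem i⟩ with hf
    have hinj : Function.Injective f := by
      intro i j h
      have h2 : l.get (Fin.cast hlen.symm i) = l.get (Fin.cast hlen.symm j) :=
        congrArg Fin.val h
      have := List.nodup_iff_injective_get.1 hnd h2
      have h3 : (i : ℕ) = (j : ℕ) := congrArg (fun x : Fin l.length => (x : ℕ)) this
      exact Fin.ext h3
    set π := Equiv.ofBijective f (Finite.injective_iff_bijective.1 hinj) with hπ
    have hpl : pl π = l := by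
      apply List.ext_get (by simp [pl, hlen])
      intro i h1 h2
      simp [pl, hπ, Equiv.ofBijective, hf]
    refine ⟨π, Finset.mem_filter.2 ⟨Finset.mem_univ _, ?_, ?_⟩, hpl⟩
    · rw [occ12_3_eq, hpl]; exact hA
    · rw [occ13_2_eq, hpl]; exact hB

/-! ### Decomposition lemmas -/

lemma occA_max_cons {M : ℕ} {t : List ℕ} (ht : ∀ x ∈ t, x < M) :
    occL condA (M :: t) = occL condA t := by
  cases t with
  | nil => simp
  | cons b t' =>
    have hb : b < M := ht b (List.mem_cons_self)
    rw [occL_cons, List.countP_eq_zero.2 (fun x hx => by simp [condA]; omega), zero_add]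

lemma occB_max_cons {M : ℕ} {t : List ℕ} (ht : ∀ x ∈ t, x < M) :
    occL condB (M :: t) = occL condB t := by
  cases t with
  | nil => simp
  | cons b t' =>
    rw [occL_cons, List.countP_eq_zero.2 (fun x hx => by
      have := ht x (List.mem_cons_of_mem _ hx); simp [condB]; omega), zero_add]

lemma occA_decomp (d : List ℕ) (M : ℕ) (t : List ℕ) (hd : d.Chain' (· > ·))
    (hdM : ∀ x ∈ d, x < M) (htM : ∀ x ∈ t, x < M) :
    occL condA (d ++ M :: t) = occL condA t := by
  induction d with
  | nil => simpa using occA_max_cons htM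
  | cons a d ih =>
    have haM : a < M := hdM a (List.mem_cons_self)
    have hdM' : ∀ x ∈ d, x < M := fun x hx => hdM x (List.mem_cons_of_mem _ hx)
    cases d with
    | nil =>
      simp only [List.cons_append, List.nil_append, occL_cons]
      rw [List.countP_eq_zero.2 (fun x hx => by have := htM x hx; simp [condA]; omega),
        zero_add, occA_max_cons htM]
    | cons a' d' =>
      have haa' : a > a' := (List.isChain_cons_cons.1 hd).1
      simp only [List.cons_append, occL_cons]
      rw [List.countP_eq_zero.2 (fun x hx => by simp [condA]; omega), zero_add]
      have := ih (List.isChain_cons_cons.1 hd).2 hdM'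
      simpa [List.cons_append] using this

lemma occB_decomp (d : List ℕ) (M : ℕ) (t : List ℕ) (hd : d.Chain' (· > ·))
    (hdM : ∀ x ∈ d, x < M) (htM : ∀ x ∈ t, x < M) :
    occL condB (d ++ M :: t) = occL condB t +
      d.getLast?.elim 0 (fun b => t.countP (fun x => decide (b < x))) := by
  induction d with
  | nil => simpa using occB_max_cons htM
  | cons a d ih =>
    have haM : a < M := hdM a (List.mem_cons_self)
    have hdM' : ∀ x ∈ d, x < M := fun x hx => hdM x (List.mem_cons_of_mem _ hx)
    cases d with
    | nil =>
      simp only [List.cons_append, List.nil_append, occL_cons]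
      rw [occB_max_cons htM]
      have : t.countP (condB a M) = t.countP (fun x => decide (a < x)) :=
        List.countP_congr (fun x hx => by have := htM x hx; simp [condB]; omega)
      rw [this]
      simp [add_comm]
    | cons a' d' =>
      have haa' : a > a' := (List.isChain_cons_cons.1 hd).1
      simp only [List.cons_append, occL_cons]
      rw [List.countP_eq_zero.2 (fun x hx => by simp [condB]; omega), zero_add]
      have := ih (List.isChain_cons_cons.1 hd).2 hdM'
      simp only [List.cons_append] at this
      rw [this, List.getLast?_cons_cons]

lemma chain_of_occA (d : List ℕ) (M : ℕ) (t : List ℕ) (hdM : ∀ x ∈ d, x < M)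
    (hnd : d.Nodup) (h : occL condA (d ++ M :: t) = 0) : d.Chain' (· > ·) := by
  induction d with
  | nil => exact List.isChain_nil
  | cons a d ih =>
    cases d with
    | nil => exact List.isChain_singleton _
    | cons a' d' =>
      simp only [List.cons_append, occL_cons] at h
      obtain ⟨h1, h2⟩ := Nat.add_eq_zero.1 h
      have haa' : ¬ a < a' := by
        intro hlt
        have : 0 < List.countP (condA a a') (d' ++ M :: t) :=
          List.countP_pos_iff.2 ⟨M, List.mem_append_right _ (List.mem_cons_self),
            by simp [condA]; exact ⟨hlt, hdM a' (List.mem_cons_of_mem _ (List.mem_cons_self))⟩⟩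
        omega
      have hne : a ≠ a' := by
        intro hEq
        exact (List.nodup_cons.1 hnd).1 (hEq ▸ List.mem_cons_self)
      refine List.isChain_cons_cons.2 ⟨by omega, ?_⟩
      refine ih (fun x hx => hdM x (List.mem_cons_of_mem _ hx)) (List.nodup_cons.1 hnd).2 ?_
      simpa [List.cons_append] using h2

lemma min_of_chain (d : List ℕ) (hd : d.Chain' (· > ·)) (b : ℕ) (hb : d.getLast? = some b) :
    b ∈ d ∧ ∀ x ∈ d, b ≤ x := by
  induction d with
  | nil => simp at hb
  | cons a d ih =>
    cases d with
    | nil =>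
      simp only [List.getLast?_singleton, Option.some.injEq] at hb
      subst hb
      simp
    | cons a' d' =>
      rw [List.getLast?_cons_cons] at hb
      have haa' : a > a' := (List.isChain_cons_cons.1 hd).1
      obtain ⟨hmem, hle⟩ := ih (List.isChain_cons_cons.1 hd).2 hb
      refine ⟨List.mem_cons_of_mem _ hmem, ?_⟩
      intro x hx
      rcases List.mem_cons.1 hx with rfl | hx
      · have := hle a' (List.mem_cons_self); omega
      · exact hle x hx

def descL (A : Finset ℕ) : List ℕ := (A.sort (· ≤ ·)).reverse

lemma descL_nodup (A : Finset ℕ) : (descL A).Nodup := by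
  rw [descL, List.nodup_reverse]; exact Finset.sort_nodup A _

lemma descL_toFinset (A : Finset ℕ) : (descL A).toFinset = A := by
  rw [descL, List.toFinset_reverse, Finset.sort_toFinset]

lemma descL_chain (A : Finset ℕ) : (descL A).Chain' (· > ·) := by
  unfold List.Chain'
  rw [List.isChain_iff_pairwise, descL, List.pairwise_reverse]
  exact (Finset.sortedLT_sort A).pairwise

lemma desc_unique (d : List ℕ) (A : Finset ℕ) (hd : d.Chain' (· > ·)) (hnd : d.Nodup)
    (hfs : d.toFinset = A) : d = descL A := by
  haveI : Std.Antisymm (· > · : ℕ → ℕ → Prop) := ⟨fun a b h1 h2 => (lt_asymm h1 h2).elim⟩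
  exact List.Perm.eq_of_pairwise'
    (List.isChain_iff_pairwise.1 hd) (List.isChain_iff_pairwise.1 (descL_chain A))
    (List.perm_of_nodup_nodup_toFinset_eq hnd (descL_nodup A) (by rw [hfs, descL_toFinset]))

lemma getLast?_chain_min' (d : List ℕ) (hd : d.Chain' (· > ·)) (hne : d ≠ [])
    (A : Finset ℕ) (hfs : d.toFinset = A) (hA : A.Nonempty) :
    d.getLast? = some (A.min' hA) := by
  have hb : d.getLast? = some (d.getLast hne) := List.getLast?_eq_getLast hne
  obtain ⟨hmem, hle⟩ := min_of_chain d hd _ hb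
  rw [hb]
  congr 1
  refine le_antisymm ?_ (A.min'_le _ (by rw [← hfs]; exact List.mem_toFinset.2 hmem))
  refine Finset.le_min' _ _ _ (fun y hy => hle y ?_)
  rw [← hfs] at hy
  exact List.mem_toFinset.1 hy

/-! ### Fiberwise decomposition -/

def K (m : ℕ) (A : Finset ℕ) : ℕ :=
  ((Finset.range m \ A).filter (fun x => ∃ a ∈ A, a < x)).card

lemma takeWhile_middle (p : ℕ → Bool) (d : List ℕ) (M : ℕ) (t : List ℕ)
    (h : ∀ x ∈ d, p x) (hM : p M = false) :
    (d ++ M :: t).takeWhile p = d ∧ (d ++ M :: t).dropWhile p = M :: t := by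
  induction d with
  | nil => simp [List.takeWhile_cons, List.dropWhile_cons, hM]
  | cons a d ih =>
    have ha : p a := h a (List.mem_cons_self)
    obtain ⟨h1, h2⟩ := ih (fun x hx => h x (List.mem_cons_of_mem _ hx))
    simp [List.takeWhile_cons, List.dropWhile_cons, ha, h1, h2]

lemma dropWhile_head?_not (p : ℕ → Bool) (l : List ℕ) (x : ℕ)
    (hx : (l.dropWhile p).head? = some x) : p x = false := by
  induction l with
  | nil => simp at hx
  | cons a l ih =>
    by_cases ha : p a
    · rw [List.dropWhile_cons_of_pos ha] at hx
      exact ih hx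
    · rw [List.dropWhile_cons_of_neg ha] at hx
      simp only [List.head?_cons, Option.some.injEq] at hx
      subst hx
      simpa using ha

lemma perm_decomp {m : ℕ} {l : List ℕ} (hnd : l.Nodup) (hfs : l.toFinset = Finset.range (m+1)) :
    ∃ d t : List ℕ, l = d ++ m :: t ∧ d = l.takeWhile (fun x => x ≠ m) ∧
      (∀ x ∈ d, x < m) ∧ (∀ x ∈ t, x < m) ∧ d.Nodup ∧ t.Nodup ∧
      t.toFinset = Finset.range m \ d.toFinset ∧ d.toFinset ⊆ Finset.range m := by
  have hml : m ∈ l := by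
    rw [← List.mem_toFinset, hfs]; exact Finset.self_mem_range_succ m
  set p : ℕ → Bool := fun x => x ≠ m with hp
  have hdw : l.dropWhile p ≠ [] := by
    intro hc
    have := List.dropWhile_eq_nil_iff.1 hc m hml
    simp [hp] at this
  set d := l.takeWhile p with hd
  have hhead : (l.dropWhile p).head hdw = m := by
    have h1 : (l.dropWhile p).head? = some ((l.dropWhile p).head hdw) :=
      List.head?_eq_head _
    have h2 := dropWhile_head?_not p l _ h1
    have h3 : decide (((l.dropWhile p).head hdw) ≠ m) = false := h2
    simpa using h3
  have hsplit : l = d ++ m :: (l.dropWhile p).tail := by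
    conv_lhs => rw [← List.takeWhile_append_dropWhile (p := p) (l := l)]
    rw [← hd]
    congr 1
    rw [← hhead]
    exact (List.cons_head_tail hdw).symm
  set t := (l.dropWhile p).tail with ht
  have hmem : ∀ x ∈ l, x ≤ m := by
    intro x hx
    have : x ∈ Finset.range (m+1) := by rw [← hfs]; exact List.mem_toFinset.2 hx
    simpa [Nat.lt_succ_iff] using this
  have hndl : (d ++ m :: t).Nodup := hsplit ▸ hnd
  rw [List.nodup_append] at hndl
  obtain ⟨hnd_d, hnd_mt, hdisj⟩ := hndl
  have hdm : ∀ x ∈ d, x < m := by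
    intro x hx
    have h1 : x ≠ m := by
      have h2 := List.mem_takeWhile_imp (hd ▸ hx)
      have h3 : decide (x ≠ m) = true := h2
      simpa using h3
    have h2 : x ≤ m := hmem x (hsplit ▸ List.mem_append_left _ hx)
    omega
  have htm : ∀ x ∈ t, x < m := by
    intro x hx
    have h1 : x ≠ m := fun hEq => (List.nodup_cons.1 hnd_mt).1 (hEq ▸ hx)
    have h2 : x ≤ m := hmem x (hsplit ▸ List.mem_append_right _ (List.mem_cons_of_mem _ hx))
    omega
  refine ⟨d, t, hsplit, rfl, hdm, htm, hnd_d, (List.nodup_cons.1 hnd_mt).2, ?_, ?_⟩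
  · ext x
    simp only [Finset.mem_sdiff, Finset.mem_range, List.mem_toFinset]
    constructor
    · intro hx
      refine ⟨htm x hx, fun hc => ?_⟩
      exact hdisj x hc x (List.mem_cons_of_mem _ hx) rfl
    · intro ⟨hx, hnx⟩
      have : x ∈ l := by
        rw [← List.mem_toFinset, hfs]; simp [Finset.mem_range]; omega
      rw [hsplit] at this
      rcases List.mem_append.1 this with h | h
      · exact absurd h hnx
      · rcases List.mem_cons.1 h with rfl | h
        · omega
        · exact h
  · intro x hx
    rw [List.mem_toFinset] at hx
    exact Finset.mem_range.2 (hdm x hx)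

lemma elim_eq_K {m : ℕ} (d t : List ℕ) (A : Finset ℕ) (hd : d.Chain' (· > ·))
    (hdfs : d.toFinset = A) (hndt : t.Nodup) (htfs : t.toFinset = Finset.range m \ A) :
    d.getLast?.elim 0 (fun b => t.countP (fun x => decide (b < x))) = K m A := by
  cases d with
  | nil =>
    have : A = ∅ := by rw [← hdfs]; rfl
    simp [this, K]
  | cons a d' =>
    have hne : a :: d' ≠ [] := by simp
    have hAne : A.Nonempty := by
      rw [← hdfs]
      exact ⟨a, List.mem_toFinset.2 (List.mem_cons_self)⟩
    rw [getLast?_chain_min' _ hd hne A hdfs hAne]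
    simp only [Option.elim_some]
    rw [K]
    have hcount : t.countP (fun x => decide (A.min' hAne < x)) =
        (t.toFinset.filter (fun x => A.min' hAne < x)).card := by
      rw [List.countP_eq_length_filter, ← List.toFinset_card_of_nodup (hndt.filter _),
        List.toFinset_filter]
      congr 1
      exact Finset.filter_congr (fun x _ => by simp)
    rw [hcount, htfs]
    exact filter_card_congr _ _ (fun x hx => by
      constructor
      · intro h; exact ⟨A.min' hAne, A.min'_mem hAne, h⟩
      · rintro ⟨a, ha, hax⟩; exact lt_of_le_of_lt (A.min'_le a ha) hax)

lemma decomp_of_mem {m c : ℕ} {l : List ℕ}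
    (h1 : l ∈ perms (Finset.range (m+1))) (h2 : occL condA l = 0) (h3 : occL condB l = c) :
    ∃ t, l = (l.takeWhile (fun x => x ≠ m)) ++ m :: t ∧
      (l.takeWhile (fun x => x ≠ m)).Chain' (· > ·) ∧
      (l.takeWhile (fun x => x ≠ m)).Nodup ∧ t.Nodup ∧
      t.toFinset = Finset.range m \ (l.takeWhile (fun x => x ≠ m)).toFinset ∧
      (l.takeWhile (fun x => x ≠ m)).toFinset ⊆ Finset.range m ∧
      t = l.drop ((l.takeWhile (fun x => x ≠ m)).toFinset.card + 1) ∧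
      occL condA t = 0 ∧ occL condB t + K m (l.takeWhile (fun x => x ≠ m)).toFinset = c := by
  rw [mem_perms] at h1
  obtain ⟨hnd, hfs⟩ := h1
  obtain ⟨d, t, hsplit, hdtw, hdm, htm, hndd, hndt, htfs, hdsub⟩ := perm_decomp hnd hfs
  rw [← hdtw]
  have hchain : d.Chain' (· > ·) := chain_of_occA d m t hdm hndd (hsplit ▸ h2)
  have hlen : d.length = d.toFinset.card := (List.toFinset_card_of_nodup hndd).symm
  have hdrop : l.drop (d.toFinset.card + 1) = t := by
    rw [hsplit, show d ++ m :: t = (d ++ [m]) ++ t by simp, ← hlen,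
      show d.length + 1 = (d ++ [m]).length by simp, List.drop_left]
  have hoccA : occL condA t = 0 := by
    rw [hsplit, occA_decomp d m t hchain hdm htm] at h2; exact h2
  have hoccB : occL condB t + K m d.toFinset = c := by
    rw [hsplit, occB_decomp d m t hchain hdm htm,
      elim_eq_K d t d.toFinset hchain rfl hndt htfs] at h3
    exact h3
  exact ⟨t, hsplit, hchain, hndd, hndt, htfs, hdsub, hdrop.symm, hoccA, hoccB⟩

lemma descL_mem_lt {m : ℕ} {A : Finset ℕ} (hA : A ⊆ Finset.range m) :
    ∀ x ∈ descL A, x < m := fun x hx =>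
  Finset.mem_range.1 (hA (descL_toFinset A ▸ List.mem_toFinset.2 hx))

lemma recomp_mem {m c : ℕ} (A : Finset ℕ) (hA : A ⊆ Finset.range m) {t : List ℕ}
    (h1 : t ∈ perms (Finset.range m \ A)) (h2 : occL condA t = 0)
    (h3 : occL condB t + K m A = c) :
    (descL A ++ m :: t) ∈ perms (Finset.range (m+1)) ∧
      occL condA (descL A ++ m :: t) = 0 ∧ occL condB (descL A ++ m :: t) = c ∧
      (descL A ++ m :: t).takeWhile (fun x => x ≠ m) = descL A := by
  rw [mem_perms] at h1
  obtain ⟨hndt, htfs⟩ := h1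
  have htm : ∀ x ∈ t, x < m := by
    intro x hx
    have : x ∈ Finset.range m \ A := htfs ▸ List.mem_toFinset.2 hx
    exact Finset.mem_range.1 (Finset.mem_sdiff.1 this).1
  have htA : ∀ x ∈ t, x ∉ A := by
    intro x hx
    have : x ∈ Finset.range m \ A := htfs ▸ List.mem_toFinset.2 hx
    exact (Finset.mem_sdiff.1 this).2
  have hdm := descL_mem_lt hA
  have hmemA : ∀ x ∈ descL A, x ∈ A := fun x hx =>
    descL_toFinset A ▸ List.mem_toFinset.2 hx
  have hnodup : (descL A ++ m :: t).Nodup := by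
    rw [List.nodup_append]
    refine ⟨descL_nodup A, List.nodup_cons.2 ⟨fun hc => absurd (htm m hc) (lt_irrefl m), hndt⟩, ?_⟩
    intro x hx y hx2 hxy
    subst hxy
    rcases List.mem_cons.1 hx2 with rfl | hx3
    · exact absurd (hdm x hx) (lt_irrefl x)
    · exact htA x hx3 (hmemA x hx)
  have hfs : (descL A ++ m :: t).toFinset = Finset.range (m+1) := by
    rw [List.toFinset_append, List.toFinset_cons, descL_toFinset, htfs]
    ext x
    simp only [Finset.mem_union, Finset.mem_insert, Finset.mem_sdiff, Finset.mem_range]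
    constructor
    · rintro (h | rfl | ⟨h, _⟩)
      · exact lt_trans (Finset.mem_range.1 (hA h)) (Nat.lt_succ_self m)
      · exact Nat.lt_succ_self x
      · omega
    · intro h
      by_cases hxm : x = m
      · right; left; exact hxm
      · by_cases hxA : x ∈ A
        · left; exact hxA
        · right; right; exact ⟨by omega, hxA⟩
  have hoccA : occL condA (descL A ++ m :: t) = 0 := by
    rw [occA_decomp _ m t (descL_chain A) hdm htm]; exact h2
  have hoccB : occL condB (descL A ++ m :: t) = c := by
    rw [occB_decomp _ m t (descL_chain A) hdm htm,
      elim_eq_K _ t A (descL_chain A) (descL_toFinset A) hndt htfs]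
    exact h3
  have htw : (descL A ++ m :: t).takeWhile (fun x => x ≠ m) = descL A :=
    (takeWhile_middle _ (descL A) m t
      (fun x hx => by simpa using Nat.ne_of_lt (hdm x hx)) (by simp)).1
  exact ⟨mem_perms.2 ⟨hnodup, hfs⟩, hoccA, hoccB, htw⟩

lemma fiber_card (m c : ℕ) (A : Finset ℕ) (hA : A ⊆ Finset.range m) :
    (((perms (Finset.range (m+1))).filter (fun l => occL condA l = 0 ∧ occL condB l = c)).filter
      (fun l => (l.takeWhile (fun x => x ≠ m)).toFinset = A)).card
    = ((perms (Finset.range m \ A)).filter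
        (fun t => occL condA t = 0 ∧ occL condB t + K m A = c)).card := by
  refine Finset.card_bij' (fun l _ => l.drop (A.card + 1)) (fun t _ => descL A ++ m :: t)
    ?_ ?_ ?_ ?_
  · intro l hl
    simp only [Finset.mem_filter] at hl
    obtain ⟨⟨hlp, hA0, hBc⟩, hAeq⟩ := hl
    subst hAeq
    obtain ⟨t, hsplit, hchain, hndd, hndt, htfs, hdsub, hdrop, hoA, hoB⟩ :=
      decomp_of_mem hlp hA0 hBc
    beta_reduce
    rw [Finset.mem_filter, ← hdrop]
    exact ⟨mem_perms.2 ⟨hndt, htfs⟩, hoA, hoB⟩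
  · intro t ht
    simp only [Finset.mem_filter] at ht
    obtain ⟨htp, hoA, hoB⟩ := ht
    obtain ⟨hmem, h1, h2, h3⟩ := recomp_mem A hA htp hoA hoB
    simp only [Finset.mem_filter]
    exact ⟨⟨hmem, h1, h2⟩, by rw [h3, descL_toFinset]⟩
  · intro l hl
    simp only [Finset.mem_filter] at hl
    obtain ⟨⟨hlp, hA0, hBc⟩, hAeq⟩ := hl
    subst hAeq
    obtain ⟨t, hsplit, hchain, hndd, hndt, htfs, hdsub, hdrop, hoA, hoB⟩ :=
      decomp_of_mem hlp hA0 hBc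
    show descL ((l.takeWhile (fun x => x ≠ m)).toFinset) ++ m ::
      l.drop ((l.takeWhile (fun x => x ≠ m)).toFinset.card + 1) = l
    rw [← hdrop]
    have hd_eq : l.takeWhile (fun x => x ≠ m) = descL ((l.takeWhile (fun x => x ≠ m)).toFinset) :=
      desc_unique _ _ hchain hndd rfl
    conv_rhs => rw [hsplit]
    rw [← hd_eq]
  · intro t ht
    simp only [Finset.mem_filter] at ht
    obtain ⟨htp, hoA, hoB⟩ := ht
    have hlen : (descL A).length = A.card := by
      rw [descL, List.length_reverse, Finset.length_sort]
    show List.drop (A.card + 1) (descL A ++ m :: t) = t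
    rw [show descL A ++ m :: t = (descL A ++ [m]) ++ t by simp,
      show A.card + 1 = (descL A ++ [m]).length by simp [hlen], List.drop_left]

/-! ### Transport along order-preserving maps -/

lemma toFinset_map' (l : List ℕ) (f : ℕ → ℕ) : (l.map f).toFinset = l.toFinset.image f := by
  ext x; simp

lemma occL_map_A (g : ℕ → ℕ) (s : Finset ℕ) (hg : ∀ x ∈ s, ∀ y ∈ s, x < y ↔ g x < g y)
    (l : List ℕ) (hl : ∀ x ∈ l, x ∈ s) : occL condA (l.map g) = occL condA l := by
  induction l with
  | nil => simp
  | cons a l ih =>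
    cases l with
    | nil => simp
    | cons b t =>
      simp only [List.map_cons, occL_cons]
      have ha : a ∈ s := hl a (List.mem_cons_self)
      have hb : b ∈ s := hl b (List.mem_cons_of_mem _ (List.mem_cons_self))
      have hcount : (t.map g).countP (condA (g a) (g b)) = t.countP (condA a b) := by
        rw [List.countP_map]
        refine List.countP_congr (fun x hx => ?_)
        have hx' : x ∈ s := hl x (List.mem_cons_of_mem _ (List.mem_cons_of_mem _ hx))
        simp only [Function.comp_apply, condA, decide_eq_true_eq]
        rw [← hg a ha b hb, ← hg b hb x hx']
      rw [hcount]
      have := ih (fun x hx => hl x (List.mem_cons_of_mem _ hx))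
      simp only [List.map_cons] at this
      rw [this]

lemma occL_map_B (g : ℕ → ℕ) (s : Finset ℕ) (hg : ∀ x ∈ s, ∀ y ∈ s, x < y ↔ g x < g y)
    (l : List ℕ) (hl : ∀ x ∈ l, x ∈ s) : occL condB (l.map g) = occL condB l := by
  induction l with
  | nil => simp
  | cons a l ih =>
    cases l with
    | nil => simp
    | cons b t =>
      simp only [List.map_cons, occL_cons]
      have ha : a ∈ s := hl a (List.mem_cons_self)
      have hb : b ∈ s := hl b (List.mem_cons_of_mem _ (List.mem_cons_self))
      have hcount : (t.map g).countP (condB (g a) (g b)) = t.countP (condB a b) := by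
        rw [List.countP_map]
        refine List.countP_congr (fun x hx => ?_)
        have hx' : x ∈ s := hl x (List.mem_cons_of_mem _ (List.mem_cons_of_mem _ hx))
        simp only [Function.comp_apply, condB, decide_eq_true_eq]
        rw [← hg a ha x hx', ← hg x hx' b hb]
      rw [hcount]
      have := ih (fun x hx => hl x (List.mem_cons_of_mem _ hx))
      simp only [List.map_cons] at this
      rw [this]

lemma transport (g : ℕ → ℕ) (s : Finset ℕ) (hg : ∀ x ∈ s, ∀ y ∈ s, x < y ↔ g x < g y) (c0 : ℕ) :
    ((perms (s.image g)).filter (fun t => occL condA t = 0 ∧ occL condB t = c0)).card =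
    ((perms s).filter (fun t => occL condA t = 0 ∧ occL condB t = c0)).card := by
  have hinj : Set.InjOn g s := by
    intro x hx y hy hxy
    by_contra hne
    rcases Nat.lt_or_ge x y with h | h
    · have := (hg x hx y hy).1 h; omega
    · have hlt : y < x := by omega
      have := (hg y hy x hx).1 hlt; omega
  set gi := Function.invFunOn g s with hgi
  have hlig : ∀ x ∈ s, gi (g x) = x := fun x hx => hinj.leftInvOn_invFunOn hx
  have hgig : ∀ y ∈ s.image g, g (gi y) = y := by
    intro y hy
    rw [Finset.mem_image] at hy
    obtain ⟨x, hx, rfl⟩ := hy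
    rw [hlig x hx]
  have hgimem : ∀ y ∈ s.image g, gi y ∈ s := by
    intro y hy
    rw [Finset.mem_image] at hy
    obtain ⟨x, hx, rfl⟩ := hy
    rw [hlig x hx]; exact hx
  refine Finset.card_bij' (fun t _ => t.map gi) (fun t _ => t.map g) ?_ ?_ ?_ ?_
  · intro t ht
    simp only [Finset.mem_filter, mem_perms] at ht ⊢
    obtain ⟨⟨hnd, hfs⟩, hoA, hoB⟩ := ht
    have hmem : ∀ y ∈ t, y ∈ s.image g := fun y hy => hfs ▸ List.mem_toFinset.2 hy
    have hmem' : ∀ x ∈ t.map gi, x ∈ s := by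
      intro x hx
      rw [List.mem_map] at hx
      obtain ⟨y, hy, rfl⟩ := hx
      exact hgimem y (hmem y hy)
    have hback : (t.map gi).map g = t := by
      rw [List.map_map]
      conv_rhs => rw [← List.map_id t]
      exact List.map_congr_left (fun y hy => hgig y (hmem y hy))
    beta_reduce
    have hA2 : occL condA (t.map gi) = occL condA t := by
      rw [← occL_map_A g s hg (t.map gi) hmem', hback]
    have hB2 : occL condB (t.map gi) = occL condB t := by
      rw [← occL_map_B g s hg (t.map gi) hmem', hback]
    rw [hA2, hB2]
    refine ⟨⟨?_, ?_⟩, hoA, hoB⟩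
    · refine (List.nodup_map_iff_inj_on hnd).2 (fun x hx y hy hxy => ?_)
      have := congrArg g hxy
      rw [hgig x (hmem x hx), hgig y (hmem y hy)] at this
      exact this
    · rw [toFinset_map', hfs]
      ext x
      simp only [Finset.mem_image]
      constructor
      · rintro ⟨y, hy, rfl⟩
        exact hgimem y (Finset.mem_image.2 hy)
      · intro hx
        exact ⟨g x, Finset.mem_image.1 (Finset.mem_image_of_mem g hx), hlig x hx⟩
  · intro t ht
    simp only [Finset.mem_filter, mem_perms] at ht ⊢
    obtain ⟨⟨hnd, hfs⟩, hoA, hoB⟩ := ht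
    have hmem : ∀ x ∈ t, x ∈ s := fun x hx => hfs ▸ List.mem_toFinset.2 hx
    beta_reduce
    rw [occL_map_A g s hg t hmem, occL_map_B g s hg t hmem]
    refine ⟨⟨?_, ?_⟩, hoA, hoB⟩
    · exact (List.nodup_map_iff_inj_on hnd).2 (fun x hx y hy hxy => hinj (hmem x hx) (hmem y hy) hxy)
    · rw [toFinset_map', hfs]
  · intro t ht
    simp only [Finset.mem_filter, mem_perms] at ht
    obtain ⟨⟨hnd, hfs⟩, _, _⟩ := ht
    have hmem : ∀ y ∈ t, y ∈ s.image g := fun y hy => hfs ▸ List.mem_toFinset.2 hy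
    show (t.map gi).map g = t
    rw [List.map_map]
    conv_rhs => rw [← List.map_id t]
    exact List.map_congr_left (fun y hy => hgig y (hmem y hy))

  · intro t ht
    simp only [Finset.mem_filter, mem_perms] at ht
    obtain ⟨⟨hnd, hfs⟩, _, _⟩ := ht
    have hmem : ∀ x ∈ t, x ∈ s := fun x hx => hfs ▸ List.mem_toFinset.2 hx
    show (t.map g).map gi = t
    rw [List.map_map]
    conv_rhs => rw [← List.map_id t]
    exact List.map_congr_left (fun x hx => hlig x (hmem x hx))

/-! ### Counting -/

def Hc (s : Finset ℕ) : ℕ := ((perms s).filter (fun t => occL condA t = 0 ∧ occL condB t = 0)).card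
def Fc (s : Finset ℕ) : ℕ := ((perms s).filter (fun t => occL condA t = 0 ∧ occL condB t = 1)).card

lemma count_split (m c : ℕ) :
    ((perms (Finset.range (m+1))).filter (fun l => occL condA l = 0 ∧ occL condB l = c)).card =
    ∑ A ∈ (Finset.range m).powerset,
      ((perms (Finset.range m \ A)).filter
        (fun t => occL condA t = 0 ∧ occL condB t + K m A = c)).card := by
  rw [Finset.card_eq_sum_card_fiberwise (f := fun l => (l.takeWhile (fun x => x ≠ m)).toFinset)
    (t := (Finset.range m).powerset) ?_]
  · exact Finset.sum_congr rfl (fun A hA => fiber_card m c A (Finset.mem_powerset.1 hA))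
  · intro l hl
    rw [Finset.mem_coe, Finset.mem_filter, mem_perms] at hl
    obtain ⟨⟨hnd, hfs⟩, _⟩ := hl
    rw [Finset.mem_coe, Finset.mem_powerset]
    intro x hx
    rw [List.mem_toFinset] at hx
    have h1 : x ≠ m := by
      have := List.mem_takeWhile_imp hx
      simpa using this
    have h2 : x ∈ l := (List.takeWhile_sublist _).subset hx
    have : x ∈ Finset.range (m+1) := hfs ▸ List.mem_toFinset.2 h2
    rw [Finset.mem_range] at this ⊢
    omega

lemma inner_eval (m c : ℕ) (A : Finset ℕ) :
    ((perms (Finset.range m \ A)).filter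
      (fun t => occL condA t = 0 ∧ occL condB t + K m A = c)).card =
    if K m A ≤ c then
      ((perms (Finset.range m \ A)).filter
        (fun t => occL condA t = 0 ∧ occL condB t = c - K m A)).card
    else 0 := by
  split
  · next h =>
    congr 1
    apply Finset.filter_congr
    intro t _
    constructor
    · rintro ⟨h1, h2⟩; exact ⟨h1, by omega⟩
    · rintro ⟨h1, h2⟩; exact ⟨h1, by omega⟩
  · next h =>
    rw [Finset.card_eq_zero, Finset.filter_eq_empty_iff]
    rintro t _ ⟨h1, h2⟩
    omega

lemma sdiff_Ico (m j : ℕ) : Finset.range m \ Finset.Ico j m = Finset.range j ∩ Finset.range m := by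
  ext x
  simp only [Finset.mem_sdiff, Finset.mem_range, Finset.mem_Ico, Finset.mem_inter]
  omega

lemma sdiff_Ico' (m j : ℕ) (hj : j ≤ m) : Finset.range m \ Finset.Ico j m = Finset.range j := by
  rw [sdiff_Ico]
  ext x
  simp only [Finset.mem_inter, Finset.mem_range]
  omega

lemma K_Ico_zero (m j : ℕ) : K m (Finset.Ico j m) = 0 := by
  rw [K, Finset.card_eq_zero, Finset.filter_eq_empty_iff]
  intro x hx
  rw [Finset.mem_sdiff, Finset.mem_range, Finset.mem_Ico] at hx
  rintro ⟨a, ha, hax⟩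
  rw [Finset.mem_Ico] at ha
  omega

lemma K_zero_upclosed {m : ℕ} {A : Finset ℕ} (hA : A ⊆ Finset.range m) (hK : K m A = 0) :
    A = Finset.Ico (m - A.card) m := by
  have hchar : ∀ x ∈ A, ∀ y, x ≤ y → y < m → y ∈ A := by
    intro x hx y hxy hym
    by_contra hy
    have hmem : y ∈ (Finset.range m \ A).filter (fun z => ∃ a ∈ A, a < z) := by
      rw [Finset.mem_filter, Finset.mem_sdiff, Finset.mem_range]
      refine ⟨⟨hym, hy⟩, x, hx, ?_⟩
      rcases Nat.lt_or_ge x y with h | h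
      · exact h
      · have : x = y := by omega
        exact absurd (this ▸ hx) hy
    rw [K, Finset.card_eq_zero] at hK
    rw [hK] at hmem
    exact absurd hmem (Finset.notMem_empty y)
  rcases A.eq_empty_or_nonempty with rfl | hne
  · simp
  · obtain ⟨a0, hmem0, hle0⟩ : ∃ a0, a0 ∈ A ∧ ∀ x ∈ A, a0 ≤ x :=
      ⟨A.min' hne, A.min'_mem hne, fun x hx => A.min'_le x hx⟩
    have ham : a0 < m := Finset.mem_range.1 (hA hmem0)
    have hAeq : A = Finset.Ico a0 m := by
      ext x
      rw [Finset.mem_Ico]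
      constructor
      · intro hx
        exact ⟨hle0 x hx, Finset.mem_range.1 (hA hx)⟩
      · rintro ⟨h1, h2⟩
        exact hchar _ hmem0 x h1 h2
    rw [hAeq, Nat.card_Ico]
    congr 1
    omega

def pairSet (m : ℕ) : Finset (ℕ × ℕ) := (Finset.range m ×ˢ Finset.range m).filter (fun p => p.1 < p.2)

def ASet (m : ℕ) (p : ℕ × ℕ) : Finset ℕ := insert p.1 ((Finset.Ico (p.1+1) m).erase p.2)

lemma ASet_mem_iff {m a c x : ℕ} (hac : a < c) (hcm : c < m) :
    x ∈ ASet m (a, c) ↔ (x = a ∨ (a < x ∧ x < m ∧ x ≠ c)) := by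
  rw [ASet, Finset.mem_insert, Finset.mem_erase, Finset.mem_Ico]
  constructor
  · rintro (rfl | ⟨h1, h2, h3⟩)
    · left; rfl
    · right; exact ⟨by omega, by omega, h1⟩
  · rintro (rfl | ⟨h1, h2, h3⟩)
    · left; rfl
    · right; exact ⟨h3, by omega, by omega⟩

lemma K_ASet_one {m a c : ℕ} (hac : a < c) (hcm : c < m) : K m (ASet m (a, c)) = 1 := by
  rw [K]
  have : (Finset.range m \ ASet m (a, c)).filter (fun x => ∃ b ∈ ASet m (a, c), b < x) = {c} := by
    ext x
    rw [Finset.mem_filter, Finset.mem_sdiff, Finset.mem_range, Finset.mem_singleton]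
    constructor
    · rintro ⟨⟨hxm, hxA⟩, b, hb, hbx⟩
      rw [ASet_mem_iff hac hcm] at hxA hb
      by_contra hxc
      rcases hb with rfl | ⟨h1, _, _⟩ <;> [skip; skip] <;>
        exact hxA (Or.inr ⟨by omega, hxm, hxc⟩)
    · rintro rfl
      refine ⟨⟨hcm, ?_⟩, a, ?_, hac⟩
      · rw [ASet_mem_iff hac hcm]
        rintro (rfl | ⟨h1, _, h3⟩)
        · omega
        · exact h3 rfl
      · rw [ASet_mem_iff hac hcm]; left; rfl
  rw [this, Finset.card_singleton]

lemma K_one_ASet {m : ℕ} {A : Finset ℕ} (hA : A ⊆ Finset.range m) (hK : K m A = 1) :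
    ∃ p ∈ pairSet m, A = ASet m p := by
  have hne : A.Nonempty := by
    rcases A.eq_empty_or_nonempty with rfl | h
    · exfalso; rw [K] at hK; simp at hK
    · exact h
  set a := A.min' hne with ha
  have hamem := A.min'_mem hne
  have ham : a < m := Finset.mem_range.1 (hA hamem)
  rw [K, Finset.card_eq_one] at hK
  obtain ⟨c, hc⟩ := hK
  have hcmem : c ∈ (Finset.range m \ A).filter (fun x => ∃ b ∈ A, b < x) := by
    rw [hc]; exact Finset.mem_singleton_self c
  rw [Finset.mem_filter, Finset.mem_sdiff, Finset.mem_range] at hcmem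
  obtain ⟨⟨hcm, hcA⟩, b, hb, hbc⟩ := hcmem
  have hac : a < c := lt_of_le_of_lt (A.min'_le b hb) hbc
  refine ⟨(a, c), ?_, ?_⟩
  · rw [pairSet, Finset.mem_filter, Finset.mem_product, Finset.mem_range, Finset.mem_range]
    exact ⟨⟨ham, hcm⟩, hac⟩
  · ext x
    rw [ASet_mem_iff hac hcm]
    constructor
    · intro hx
      by_cases hxa : x = a
      · left; exact hxa
      · right
        have h1 : a < x := lt_of_le_of_ne (A.min'_le x hx) (Ne.symm hxa)
        have h2 : x < m := Finset.mem_range.1 (hA hx)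
        refine ⟨h1, h2, fun hxc => hcA (hxc ▸ hx)⟩
    · rintro (rfl | ⟨h1, h2, h3⟩)
      · exact hamem
      · by_contra hx
        have : x ∈ (Finset.range m \ A).filter (fun z => ∃ b ∈ A, b < z) := by
          rw [Finset.mem_filter, Finset.mem_sdiff, Finset.mem_range]
          exact ⟨⟨h2, hx⟩, a, hamem, h1⟩
        rw [hc, Finset.mem_singleton] at this
        exact h3 this

lemma Ico_subset_range (j m : ℕ) : Finset.Ico j m ⊆ Finset.range m := by
  intro x hx
  rw [Finset.mem_Ico] at hx
  exact Finset.mem_range.2 hx.2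

lemma filter_K_zero (m : ℕ) :
    ((Finset.range m).powerset.filter (fun A => K m A = 0)) =
      (Finset.range (m+1)).image (fun j => Finset.Ico j m) := by
  ext B
  rw [Finset.mem_filter, Finset.mem_powerset, Finset.mem_image]
  constructor
  · rintro ⟨hB, hK⟩
    refine ⟨m - B.card, Finset.mem_range.2 (by omega), (K_zero_upclosed hB hK).symm⟩
  · rintro ⟨j, hj, rfl⟩
    exact ⟨Ico_subset_range j m, K_Ico_zero m j⟩

lemma Ico_inj_on (m : ℕ) : ∀ j ∈ Finset.range (m+1), ∀ j' ∈ Finset.range (m+1),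
    Finset.Ico j m = Finset.Ico j' m → j = j' := by
  intro j hj j' hj' h
  rw [Finset.mem_range] at hj hj'
  have := congrArg Finset.card h
  rw [Nat.card_Ico, Nat.card_Ico] at this
  omega

lemma Hc_rec (m : ℕ) : Hc (Finset.range (m+1)) = ∑ j ∈ Finset.range (m+1), Hc (Finset.range j) := by
  rw [Hc, count_split m 0]
  rw [Finset.sum_congr rfl (fun A _ => inner_eval m 0 A)]
  have hstep : ∀ A ∈ (Finset.range m).powerset,
      (if K m A ≤ 0 then
        ((perms (Finset.range m \ A)).filter
          (fun t => occL condA t = 0 ∧ occL condB t = 0 - K m A)).card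
      else 0) = if K m A = 0 then Hc (Finset.range m \ A) else 0 := by
    intro A _
    by_cases h : K m A = 0
    · rw [if_pos (by omega), if_pos h, h, Hc]
    · rw [if_neg (by omega), if_neg h]
  rw [Finset.sum_congr rfl hstep, ← Finset.sum_filter, filter_K_zero,
    Finset.sum_image (Ico_inj_on m)]
  refine Finset.sum_congr rfl (fun j hj => ?_)
  rw [sdiff_Ico' m j (by rw [Finset.mem_range] at hj; omega)]

lemma perms_empty : perms (∅ : Finset ℕ) = {[]} := by
  rw [perms, Finset.sort_empty]
  ext l
  simp [List.permutations]

lemma Hc_empty : Hc ∅ = 1 := by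
  rw [Hc, perms_empty]
  rw [Finset.filter_singleton]
  norm_num

lemma Fc_empty : Fc ∅ = 0 := by
  rw [Fc, perms_empty]
  rw [Finset.filter_singleton]
  norm_num

lemma Hc_range : ∀ n : ℕ, Hc (Finset.range n) = if n = 0 then 1 else 2^(n-1) := by
  intro n
  induction n using Nat.strong_induction_on with
  | _ n ih =>
    match n with
    | 0 => simpa using Hc_empty
    | (m+1) =>
      rw [Hc_rec m, if_neg (Nat.succ_ne_zero m)]
      have : ∀ j ∈ Finset.range (m+1), Hc (Finset.range j) = if j = 0 then 1 else 2^(j-1) := by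
        intro j hj
        exact ih j (by rw [Finset.mem_range] at hj; omega)
      rw [Finset.sum_congr rfl this]
      clear this ih
      induction m with
      | zero => simp
      | succ k ihk =>
        rw [Finset.sum_range_succ, ihk]
        simp only [Nat.succ_ne_zero, if_false]
        have h1 : (k+1) - 1 = k := by omega
        have h2 : (k+2) - 1 = k+1 := by omega
        rw [h1, h2, pow_succ]
        ring

lemma union_singleton_image {a c : ℕ} (hac : a < c) :
    (Finset.range a ∪ {c}).image (fun x => if x = c then a else x) = Finset.range (a+1) := by
  ext y
  simp only [Finset.mem_image, Finset.mem_union, Finset.mem_range, Finset.mem_singleton]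
  constructor
  · rintro ⟨x, hx | rfl, rfl⟩
    · rw [if_neg (by omega)]; omega
    · rw [if_pos rfl]; omega
  · intro hy
    by_cases hya : y = a
    · exact ⟨c, Or.inr rfl, by rw [if_pos rfl, hya]⟩
    · exact ⟨y, Or.inl (by omega), by rw [if_neg (by omega)]⟩

lemma Hc_union_singleton {a c : ℕ} (hac : a < c) : Hc (Finset.range a ∪ {c}) = 2^a := by
  have hg : ∀ x ∈ Finset.range a ∪ {c}, ∀ y ∈ Finset.range a ∪ {c},
      x < y ↔ (if x = c then a else x) < (if y = c then a else y) := by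
    intro x hx y hy
    simp only [Finset.mem_union, Finset.mem_range, Finset.mem_singleton] at hx hy
    rcases hx with hx | rfl <;> rcases hy with hy | rfl
    · rw [if_neg (by omega), if_neg (by omega)]
    · rw [if_neg (by omega), if_pos rfl]; omega
    · rw [if_pos rfl, if_neg (by omega)]; omega
    · omega
  have := transport (fun x => if x = c then a else x) (Finset.range a ∪ {c}) hg 0
  rw [union_singleton_image hac] at this
  have h2 : Hc (Finset.range (a+1)) = 2^a := by
    rw [Hc_range (a+1)]
    simp
  rw [Hc, ← this, ← h2, Hc]

lemma mem_pairSet {m a c : ℕ} : (a, c) ∈ pairSet m ↔ a < c ∧ c < m := by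
  rw [pairSet, Finset.mem_filter, Finset.mem_product, Finset.mem_range, Finset.mem_range]
  constructor
  · rintro ⟨⟨_, h2⟩, h3⟩; exact ⟨h3, h2⟩
  · rintro ⟨h1, h2⟩; exact ⟨⟨by omega, h2⟩, h1⟩

lemma filter_K_one (m : ℕ) :
    ((Finset.range m).powerset.filter (fun A => K m A = 1)) =
      (pairSet m).image (ASet m) := by
  ext B
  rw [Finset.mem_filter, Finset.mem_powerset, Finset.mem_image]
  constructor
  · rintro ⟨hB, hK⟩
    obtain ⟨p, hp, hBp⟩ := K_one_ASet hB hK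
    exact ⟨p, hp, hBp.symm⟩
  · rintro ⟨⟨a, c⟩, hp, rfl⟩
    rw [mem_pairSet] at hp
    constructor
    · intro x hx
      rw [ASet_mem_iff hp.1 hp.2] at hx
      rw [Finset.mem_range]
      rcases hx with rfl | ⟨_, h, _⟩
      · omega
      · exact h
    · exact K_ASet_one hp.1 hp.2

lemma ASet_inj (m : ℕ) : ∀ p ∈ pairSet m, ∀ q ∈ pairSet m, ASet m p = ASet m q → p = q := by
  rintro ⟨a, c⟩ hp ⟨a', c'⟩ hq h
  rw [mem_pairSet] at hp hq
  obtain ⟨hac, hcm⟩ := hp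
  obtain ⟨hac', hcm'⟩ := hq
  have haa' : a = a' := by
    have h1 : a ∈ ASet m (a', c') := by
      rw [← h, ASet_mem_iff hac hcm]; left; rfl
    have h2 : a' ∈ ASet m (a, c) := by
      rw [h, ASet_mem_iff hac' hcm']; left; rfl
    rw [ASet_mem_iff hac' hcm'] at h1
    rw [ASet_mem_iff hac hcm] at h2
    omega
  subst haa'
  have hcc' : c = c' := by
    by_contra hne
    have h1 : c' ∈ ASet m (a, c) := by
      rw [ASet_mem_iff hac hcm]
      right
      exact ⟨hac', hcm', fun hc => hne hc.symm⟩
    rw [h, ASet_mem_iff hac' hcm'] at h1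
    rcases h1 with rfl | ⟨_, _, h3⟩
    · omega
    · exact h3 rfl
  rw [hcc']

lemma sdiff_ASet {m a c : ℕ} (hac : a < c) (hcm : c < m) :
    Finset.range m \ ASet m (a, c) = Finset.range a ∪ {c} := by
  ext x
  rw [Finset.mem_sdiff, Finset.mem_union, Finset.mem_range, Finset.mem_range,
    Finset.mem_singleton, ASet_mem_iff hac hcm]
  constructor
  · rintro ⟨h1, h2⟩
    push_neg at h2
    obtain ⟨h3, h4⟩ := h2
    by_cases hxc : x = c
    · right; exact hxc
    · left
      rcases Nat.lt_or_ge x a with h | h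
      · exact h
      · exfalso
        have : a < x := by omega
        exact hxc (h4 this h1)
  · rintro (h | rfl)
    · refine ⟨by omega, ?_⟩
      rintro (rfl | ⟨h1, _, _⟩) <;> omega
    · refine ⟨hcm, ?_⟩
      rintro (rfl | ⟨_, _, h3⟩)
      · omega
      · exact h3 rfl

lemma Fc_rec (m : ℕ) : Fc (Finset.range (m+1)) =
    (∑ j ∈ Finset.range (m+1), Fc (Finset.range j)) + ∑ p ∈ pairSet m, 2^p.1 := by
  rw [Fc, count_split m 1]
  rw [Finset.sum_congr rfl (fun A _ => inner_eval m 1 A)]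
  have hstep : ∀ A ∈ (Finset.range m).powerset,
      (if K m A ≤ 1 then
        ((perms (Finset.range m \ A)).filter
          (fun t => occL condA t = 0 ∧ occL condB t = 1 - K m A)).card
      else 0) =
      (if K m A = 0 then Fc (Finset.range m \ A) else 0) +
      (if K m A = 1 then Hc (Finset.range m \ A) else 0) := by
    intro A _
    by_cases h0 : K m A = 0
    · rw [if_pos (by omega), if_pos h0, if_neg (by omega), h0, Fc]
      norm_num
    · by_cases h1 : K m A = 1
      · rw [if_pos (by omega), if_neg h0, if_pos h1, h1, Hc]
        norm_num
      · rw [if_neg (by omega), if_neg h0, if_neg h1]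
  rw [Finset.sum_congr rfl hstep, Finset.sum_add_distrib]
  congr 1
  · rw [← Finset.sum_filter, filter_K_zero, Finset.sum_image (Ico_inj_on m)]
    refine Finset.sum_congr rfl (fun j hj => ?_)
    rw [sdiff_Ico' m j (by rw [Finset.mem_range] at hj; omega)]
  · rw [← Finset.sum_filter, filter_K_one, Finset.sum_image (ASet_inj m)]
    refine Finset.sum_congr rfl (fun p hp => ?_)
    obtain ⟨a, c⟩ := p
    rw [mem_pairSet] at hp
    rw [sdiff_ASet hp.1 hp.2, Hc_union_singleton hp.1]

/-! ### Arithmetic -/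

lemma pairSet_zero : pairSet 0 = ∅ := by
  rw [pairSet]
  simp

lemma pairSet_succ (m : ℕ) :
    pairSet (m+1) = pairSet m ∪ (Finset.range m).image (fun a => (a, m)) := by
  ext ⟨a, c⟩
  rw [Finset.mem_union, mem_pairSet, mem_pairSet, Finset.mem_image]
  constructor
  · rintro ⟨h1, h2⟩
    by_cases hc : c = m
    · right; exact ⟨a, Finset.mem_range.2 (by omega), by rw [hc]⟩
    · left; exact ⟨h1, by omega⟩
  · rintro (⟨h1, h2⟩ | ⟨a', ha', heq⟩)
    · exact ⟨h1, by omega⟩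
    · rw [Finset.mem_range] at ha'
      obtain ⟨rfl, rfl⟩ := Prod.mk.injEq .. ▸ heq
      exact ⟨ha', by omega⟩

lemma geom_two (m : ℕ) : (∑ a ∈ Finset.range m, 2^a) + 1 = 2^m := by
  induction m with
  | zero => simp
  | succ k ih =>
    rw [Finset.sum_range_succ, pow_succ]
    omega

lemma T_val (m : ℕ) : (∑ p ∈ pairSet m, 2^p.1) + m + 1 = 2^m := by
  induction m with
  | zero => rw [pairSet_zero]; simp
  | succ k ih =>
    have hdisj : Disjoint (pairSet k) ((Finset.range k).image (fun a => (a, k))) := by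
      rw [Finset.disjoint_left]
      rintro ⟨a, c⟩ hp hq
      rw [mem_pairSet] at hp
      rw [Finset.mem_image] at hq
      obtain ⟨a', _, heq⟩ := hq
      have : c = k := (Prod.mk.injEq .. ▸ heq).2.symm
      omega
    have hinj : ∀ a ∈ Finset.range k, ∀ a' ∈ Finset.range k,
        (fun a => (a, k)) a = (fun a => (a, k)) a' → a = a' := by
      intro a _ a' _ h
      exact (Prod.mk.injEq .. ▸ h).1
    rw [pairSet_succ, Finset.sum_union hdisj, Finset.sum_image hinj]
    simp only []
    have hg := geom_two k
    have hp : 2^(k+1) = 2^k + 2^k := by rw [pow_succ]; omega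
    omega

def q : ℕ → ℚ
  | 0 => 0
  | 1 => 0
  | 2 => 0
  | (n+3) => (n : ℚ) * 2^(n+1) + 1

lemma qid (m : ℕ) : q (m+2) = 2 * q (m+1) + 2^m - 1 := by
  match m with
  | 0 => show q 2 = 2 * q 1 + 2^0 - 1; show (0:ℚ) = 2 * 0 + 2^0 - 1; norm_num
  | 1 => show q 3 = 2 * q 2 + 2^1 - 1; show (0:ℚ) * 2^1 + 1 = 2 * 0 + 2^1 - 1; norm_num
  | (k+2) =>
    show ((k+1 : ℕ) : ℚ) * 2^(k+2) + 1 = 2 * ((k : ℚ) * 2^(k+1) + 1) + 2^(k+2) - 1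
    push_cast
    ring

lemma sum_q (m : ℕ) : (∑ j ∈ Finset.range (m+1), q j) + 2^m - m - 1 = q (m+1) := by
  induction m with
  | zero =>
    rw [Finset.sum_range_one]
    show q 0 + 2^0 - (0:ℕ) - 1 = q 1
    show (0:ℚ) + 2^0 - (0:ℕ) - 1 = 0
    norm_num
  | succ k ih =>
    rw [Finset.sum_range_succ]
    have hq := qid k
    have hp : (2:ℚ)^(k+1) = 2 * 2^k := by rw [pow_succ]; ring
    push_cast at ih ⊢
    linarith

lemma Fc_q : ∀ n : ℕ, (Fc (Finset.range n) : ℚ) = q n := by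
  intro n
  induction n using Nat.strong_induction_on with
  | _ n ih =>
    match n with
    | 0 =>
      show ((Fc ∅ : ℕ) : ℚ) = 0
      rw [Fc_empty]; norm_num
    | (m+1) =>
      rw [Fc_rec m]
      push_cast
      have h1 : ∀ j ∈ Finset.range (m+1), ((Fc (Finset.range j) : ℕ) : ℚ) = q j := by
        intro j hj
        exact ih j (by rw [Finset.mem_range] at hj; omega)
      rw [Finset.sum_congr rfl h1]
      have hT : ((∑ p ∈ pairSet m, 2^p.1 : ℕ) : ℚ) = 2^m - m - 1 := by
        have := T_val m
        have hcast : ((∑ p ∈ pairSet m, 2^p.1 : ℕ) : ℚ) + m + 1 = 2^m := by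
          exact_mod_cast congrArg (fun x : ℕ => (x : ℚ)) this
        linarith
      push_cast at hT
      rw [hT]
      have := sum_q m
      linarith

theorem stmt1 (n : ℕ) (hn : 1 ≤ n) :
    ((Finset.univ.filter (fun π : Equiv.Perm (Fin n) =>
      occ12_3 π = 0 ∧ occ13_2 π = 1)).card : ℚ) =
      ((n : ℚ) - 3) * (2 : ℚ) ^ ((n : ℤ) - 2) + 1 := by
  have hmain : ((Finset.univ.filter (fun π : Equiv.Perm (Fin n) =>
      occ12_3 π = 0 ∧ occ13_2 π = 1)).card : ℚ) = q n := by
    rw [card_perm_eq n]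
    exact Fc_q n
  rw [hmain]
  match n, hn with
  | 1, _ =>
    show (0:ℚ) = (((1:ℕ) : ℚ) - 3) * (2 : ℚ) ^ (((1:ℕ) : ℤ) - 2) + 1
    rw [show ((1:ℕ) : ℤ) - 2 = -1 by norm_num]
    rw [show ((2:ℚ)) ^ (-1 : ℤ) = 1/2 by norm_num]
    norm_num
  | 2, _ =>
    show (0:ℚ) = (((2:ℕ) : ℚ) - 3) * (2 : ℚ) ^ (((2:ℕ) : ℤ) - 2) + 1
    rw [show ((2:ℕ) : ℤ) - 2 = 0 by norm_num]
    norm_num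
  | (m+3), _ =>
    show ((m:ℕ) : ℚ) * 2^(m+1) + 1 = (((m+3:ℕ) : ℚ) - 3) * (2 : ℚ) ^ (((m+3:ℕ) : ℤ) - 2) + 1
    rw [show ((m+3:ℕ) : ℤ) - 2 = ((m+1 : ℕ) : ℤ) by push_cast; ring, zpow_natCast]
    push_cast
    ring
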